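/- Let F be an n×n nonnegative matrix with all diagonal entries zero, such that exactly one row sum is at least 1 and all other row sums are strictly less than 1. Then ρ(F) ≤ √(α₁ α₃), where α₁ = max{Λ_s[F] : Λ_s[F] < 1} and α₃ is the unique row sum that is at least 1. -/

import Mathlib

/-- The spectral radius of a real square matrix. -/
noncomputable def specRad {n : ℕ} (M : Matrix (Fin n) (Fin n) ℝ) : ℝ :=
  ⨆ μ : spectrum ℂ (M.map (algebraMap ℝ ℂ)), ‖(μ : ℂ)‖

/-- Theorem 2.7: Let `F` (`n ≥ 2`) be nonnegative with zero diagonal, with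
exactly one row sum at least `1` (say at row `s₀`, with value `α₃`) and all
other row sums strictly less than `1`.  Then `ρ(F) ≤ √(α₁ α₃)`, where `α₁` is
the largest row sum `< 1`. -/
theorem specRad_le_sqrt_mul {n : ℕ} (hn : 2 ≤ n) (F : Matrix (Fin n) (Fin n) ℝ)
    (hnn : ∀ i j, 0 ≤ F i j) (hdiag : ∀ i, F i i = 0)
    (s₀ : Fin n) (hs₀ : 1 ≤ ∑ j, F s₀ j)
    (hothers : ∀ s, s ≠ s₀ → ∑ j, F s j < 1)
    (α₁ α₃ : ℝ)
    (hα₁ : IsGreatest {x | ∃ s, (∑ j, F s j) = x ∧ x < 1} α₁)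
    (hα₃ : α₃ = ∑ j, F s₀ j) :
    specRad F ≤ Real.sqrt (α₁ * α₃) := by
  have hΛnn : ∀ s : Fin n, (0:ℝ) ≤ ∑ j, F s j := fun s =>
    Finset.sum_nonneg fun j _ => hnn s j
  haveI : Nontrivial (Fin n) := Fin.nontrivial_iff_two_le.mpr hn
  obtain ⟨s₁, hs₁⟩ := exists_ne s₀
  have hα₁nn : (0:ℝ) ≤ α₁ := le_trans (hΛnn s₁) (hα₁.2 ⟨s₁, rfl, hothers s₁ hs₁⟩)
  have hα₃pos : (0:ℝ) < α₃ := lt_of_lt_of_le one_pos (hα₃ ▸ hs₀)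
  have hΛle₃ : ∀ s : Fin n, (∑ j, F s j) ≤ α₃ := by
    intro s
    by_cases h : s = s₀
    · exact h ▸ hα₃.symm.le
    · exact le_trans (hothers s h).le (by rw [hα₃]; exact hs₀)
  have hΛle₁ : ∀ s : Fin n, s ≠ s₀ → (∑ j, F s j) ≤ α₁ := fun s hs =>
    hα₁.2 ⟨s, rfl, hothers s hs⟩
  -- main eigenvalue bound
  have key : ∀ μ : ℂ, μ ∈ spectrum ℂ (F.map (algebraMap ℝ ℂ)) →
      ‖μ‖ ≤ Real.sqrt (α₁ * α₃) := by
    intro μ hμ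
    set M := F.map (algebraMap ℝ ℂ) with hM
    rw [spectrum.mem_iff] at hμ
    have hdet : (algebraMap ℂ (Matrix (Fin n) (Fin n) ℂ) μ - M).det = 0 := by
      by_contra h
      exact hμ ((Matrix.isUnit_iff_isUnit_det _).mpr (isUnit_iff_ne_zero.mpr h))
    obtain ⟨v, hv0, hv⟩ := (Matrix.exists_mulVec_eq_zero_iff).mpr hdet
    -- eigen-equation componentwise
    have heig : ∀ i, μ * v i = ∑ j, (F i j : ℂ) * v j := by
      intro i
      have := congrFun hv i
      simp only [Matrix.sub_mulVec, Pi.sub_apply, Pi.zero_apply, sub_eq_zero] at this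
      have h1 : (algebraMap ℂ (Matrix (Fin n) (Fin n) ℂ) μ).mulVec v i = μ * v i := by
        simp [Matrix.algebraMap_eq_diagonal, Matrix.mulVec_diagonal]
      have h2 : M.mulVec v i = ∑ j, (F i j : ℂ) * v j := by
        simp [Matrix.mulVec, dotProduct, hM, Matrix.map_apply]
      rw [h1, h2] at this
      exact this
    set a : Fin n → ℝ := fun i => ‖v i‖ with ha
    have hann : ∀ i, 0 ≤ a i := fun i => norm_nonneg _
    obtain ⟨p, -, hp⟩ := Finset.exists_max_image Finset.univ a Finset.univ_nonempty
    have hqne : (Finset.univ.erase p).Nonempty := by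
      obtain ⟨q', hq'⟩ := exists_ne p
      exact ⟨q', Finset.mem_erase.mpr ⟨hq', Finset.mem_univ _⟩⟩
    obtain ⟨q, hqmem, hq⟩ := Finset.exists_max_image (Finset.univ.erase p) a hqne
    have hpq : q ≠ p := (Finset.mem_erase.mp hqmem).1
    have haq : ∀ j, j ≠ p → a j ≤ a q := fun j hj =>
      hq j (Finset.mem_erase.mpr ⟨hj, Finset.mem_univ _⟩)
    have hap : ∀ j, a j ≤ a p := fun j => hp j (Finset.mem_univ _)
    -- row bound
    have hrow : ∀ i, ∀ b : ℝ, (∀ j, F i j * a j ≤ F i j * b) →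
        ‖μ‖ * a i ≤ (∑ j, F i j) * b := by
      intro i b hb
      have h1 : ‖μ‖ * a i = ‖∑ j, (F i j : ℂ) * v j‖ := by
        rw [← heig i, norm_mul]
      have h2 : ‖∑ j, (F i j : ℂ) * v j‖ ≤ ∑ j, F i j * a j := by
        refine le_trans (norm_sum_le _ _) (le_of_eq ?_)
        refine Finset.sum_congr rfl fun j _ => ?_
        rw [norm_mul, Complex.norm_real, Real.norm_eq_abs, abs_of_nonneg (hnn i j)]
      calc ‖μ‖ * a i ≤ ∑ j, F i j * a j := h1 ▸ h2
        _ ≤ ∑ j, F i j * b := Finset.sum_le_sum fun j _ => hb j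
        _ = (∑ j, F i j) * b := (Finset.sum_mul _ _ _).symm
    have hrowp : ‖μ‖ * a p ≤ (∑ j, F p j) * a q := by
      refine hrow p (a q) fun j => ?_
      by_cases hj : j = p
      · rw [hj, hdiag p]; simp
      · exact mul_le_mul_of_nonneg_left (haq j hj) (hnn p j)
    have hrowq : ‖μ‖ * a q ≤ (∑ j, F q j) * a p := by
      exact hrow q (a p) fun j => mul_le_mul_of_nonneg_left (hap j) (hnn q j)
    -- Λ_p Λ_q ≤ α₁ α₃
    have hΛΛ : (∑ j, F p j) * (∑ j, F q j) ≤ α₁ * α₃ := by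
      by_cases hps : p = s₀
      · have hq0 : q ≠ s₀ := hps ▸ hpq
        calc (∑ j, F p j) * (∑ j, F q j) ≤ α₃ * α₁ :=
              mul_le_mul (hΛle₃ p) (hΛle₁ q hq0) (hΛnn q) hα₃pos.le
          _ = α₁ * α₃ := mul_comm _ _
      · exact mul_le_mul (hΛle₁ p hps) (hΛle₃ q) (hΛnn q) hα₁nn
    by_cases haq0 : a q = 0
    · -- then μ * v p has abs 0 hence μ = 0
      have hap0 : 0 < a p := by
        by_contra h
        push_neg at h
        apply hv0
        funext i
        have : a i = 0 := le_antisymm (le_trans (hap i) h) (hann i)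
        exact norm_eq_zero.mp this
      have : ‖μ‖ * a p ≤ 0 := by
        have := hrowp
        rw [haq0, mul_zero] at this
        exact this
      have hμ0 : ‖μ‖ = 0 :=
        le_antisymm (nonpos_of_mul_nonpos_right (by linarith [mul_nonneg (norm_nonneg μ) (hann p)]) hap0) (norm_nonneg μ)
      rw [hμ0]
      exact Real.sqrt_nonneg _
    · have haqpos : 0 < a q := lt_of_le_of_ne (hann q) (Ne.symm haq0)
      have happos : 0 < a p := lt_of_lt_of_le haqpos (hap q)
      have hsq : ‖μ‖ ^ 2 ≤ α₁ * α₃ := by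
        have h1 : (‖μ‖ * a p) * (‖μ‖ * a q) ≤
            ((∑ j, F p j) * a q) * ((∑ j, F q j) * a p) :=
          mul_le_mul hrowp hrowq (mul_nonneg (norm_nonneg μ) (hann q))
            (mul_nonneg (hΛnn p) (hann q))
        have h2 : ‖μ‖ ^ 2 * (a p * a q) ≤
            ((∑ j, F p j) * (∑ j, F q j)) * (a p * a q) := by ring_nf; ring_nf at h1; linarith
        have h4 : ‖μ‖ ^ 2 ≤ (∑ j, F p j) * (∑ j, F q j) :=
          le_of_mul_le_mul_right (by linarith) (mul_pos happos haqpos)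
        exact le_trans h4 hΛΛ
      calc ‖μ‖ = Real.sqrt (‖μ‖ ^ 2) :=
            (Real.sqrt_sq (norm_nonneg μ)).symm
        _ ≤ Real.sqrt (α₁ * α₃) := Real.sqrt_le_sqrt hsq
  exact Real.iSup_le (fun μ => key μ.1 μ.2) (Real.sqrt_nonneg _)
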